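/- Let G be a group and for g ∈ G set H_g := {(h, g⁻¹hg) : h ∈ G}, a subgroup of G × G. Then for g, g' ∈ G, the subgroups H_g and H_{g'} are commensurable if and only if the centralizer C_G(g'·g⁻¹) has finite index in G. -/

import Mathlib

/-- The graph of conjugation by `g`, a subgroup of `G × G`. -/
def conjGraph {G : Type*} [Group G] (g : G) : Subgroup (G × G) where
  carrier := {p : G × G | p.2 = g⁻¹ * p.1 * g}
  one_mem' := by simp
  mul_mem' := by
    rintro ⟨a, b⟩ ⟨c, d⟩ hab hcd
    simp only [Set.mem_setOf_eq] at *
    subst hab; subst hcd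
    simp only [Prod.fst_mul, Prod.snd_mul]
    group
  inv_mem' := by
    rintro ⟨a, b⟩ hab
    simp only [Set.mem_setOf_eq] at *
    subst hab
    simp only [Prod.fst_inv, Prod.snd_inv]
    group

/-- The natural isomorphism `G ≃* H_g`. -/
def conjGraphEquiv {G : Type*} [Group G] (g : G) : G ≃* conjGraph g where
  toFun h := ⟨(h, g⁻¹ * h * g), rfl⟩
  invFun p := p.1.1
  left_inv h := rfl
  right_inv p := Subtype.ext (Prod.ext rfl p.2.symm)
  map_mul' a b := Subtype.ext (Prod.ext rfl
    (show g⁻¹ * (a * b) * g = (g⁻¹ * a * g) * (g⁻¹ * b * g) by group))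

lemma centralizer_singleton_inv {G : Type*} [Group G] (x : G) :
    Subgroup.centralizer {x⁻¹} = Subgroup.centralizer {x} := by
  ext z
  simp only [Subgroup.mem_centralizer_iff, Set.mem_singleton_iff, forall_eq]
  constructor <;> intro H
  · have H' : Commute x⁻¹ z := H
    simpa using H'.inv_left.eq
  · have H' : Commute x z := H
    exact H'.inv_left

lemma conjGraph_relindex {G : Type*} [Group G] (g g' : G) :
    (conjGraph g').relIndex (conjGraph g) = (Subgroup.centralizer {g' * g⁻¹}).index := by
  have hc : ((conjGraph g').subgroupOf (conjGraph g)).comap (conjGraphEquiv g).toMonoidHom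
      = Subgroup.centralizer {g' * g⁻¹} := by
    ext h
    simp only [Subgroup.mem_comap, Subgroup.mem_subgroupOf, Subgroup.mem_centralizer_iff,
      Set.mem_singleton_iff, forall_eq]
    show (g⁻¹ * h * g = g'⁻¹ * h * g') ↔ (g' * g⁻¹ * h = h * (g' * g⁻¹))
    constructor <;> intro H
    · calc g' * g⁻¹ * h = g' * (g⁻¹ * h * g) * g⁻¹ := by group
        _ = g' * (g'⁻¹ * h * g') * g⁻¹ := by rw [H]
        _ = h * (g' * g⁻¹) := by group
    · calc g⁻¹ * h * g = g'⁻¹ * (g' * g⁻¹ * h) * g := by group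
        _ = g'⁻¹ * (h * (g' * g⁻¹)) * g := by rw [H]
        _ = g'⁻¹ * h * g' := by group
  rw [Subgroup.relIndex, ← hc,
    Subgroup.index_comap_of_surjective _ (conjGraphEquiv g).surjective]

/-- `H_g = {(h, g⁻¹hg) : h ∈ G}` and `H_{g'}` are commensurable subgroups of
`G × G` iff the centralizer of `g' * g⁻¹` has finite index in `G`. -/
theorem conjGraph_commensurable_iff (G : Type*) [Group G] (g g' : G) :
    Subgroup.Commensurable (conjGraph g) (conjGraph g') ↔
      (Subgroup.centralizer {g' * g⁻¹}).index ≠ 0 := by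
  have h1 : g * g'⁻¹ = (g' * g⁻¹)⁻¹ := by group
  rw [Subgroup.Commensurable, conjGraph_relindex, conjGraph_relindex, h1,
    centralizer_singleton_inv, and_self]
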